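/- Let p be a prime and d a positive integer such that 2d = a·p^m·(p−1) for some integer m ≥ 0 and some integer a with 0 < a < p. Then B_0(p,d) = B'(p,d). -/

import Mathlib

/-- `lambdaP p m = ∑ i·c_i·p^i` where `m = ∑ c_i p^i` is the base-`p` expansion. -/
def lambdaP (p m : ℕ) : ℕ :=
  ∑ i ∈ Finset.range (Nat.digits p m).length, i * (Nat.digits p m).getD i 0 * p ^ i

/-- The Brumer–Kramer local conductor bound divided by `d` (rounded down):
`B'(p,d) = 2 + ⌊(p·t + (p−1)·λ_p(t))/d⌋` with `t = ⌊2d/(p−1)⌋`. -/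
def Bprime (p d : ℕ) : ℕ :=
  2 + (p * (2 * d / (p - 1)) + (p - 1) * lambdaP p (2 * d / (p - 1))) / d

/-- The bound `B_0(p,d)` of the paper. -/
def B0 (p d : ℕ) : ℕ :=
  if p = 2 then 8 + 2 * padicValNat 2 d
  else if p = 3 then 5 + 2 * padicValNat 3 d
  else if (p - 1) ∣ 2 * d then 4 + 2 * padicValNat p d
  else 2

lemma lambdaP_a_pow (p a m : ℕ) (hp : 1 < p) (ha : a ≠ 0) (hap : a < p) :
    lambdaP p (a * p ^ m) = m * a * p ^ m := by
  unfold lambdaP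
  rw [mul_comm a, Nat.digits_base_pow_mul hp (Nat.pos_of_ne_zero ha),
    Nat.digits_of_lt _ _ ha hap]
  simp only [List.length_append, List.length_replicate, List.length_singleton]
  rw [Finset.sum_range_succ]
  have h1 : ∀ i ∈ Finset.range m,
      i * (List.replicate m 0 ++ [a]).getD i 0 * p ^ i = 0 := by
    intro i hi
    simp only [Finset.mem_range] at hi
    rw [List.getD_append _ _ _ _ (by simpa using hi)]
    simp
  rw [Finset.sum_congr rfl h1]
  have h2 : (List.replicate m 0 ++ [a]).getD m 0 = a := by
    rw [List.getD_append_right _ _ _ _ (by simp)]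
    simp
  simp [h2]

theorem stmt_5 (p d a m : ℕ) (hp : p.Prime) (hd : 0 < d)
    (h2d : 2 * d = a * p ^ m * (p - 1)) (ha0 : 0 < a) (hap : a < p) :
    B0 p d = Bprime p d := by
  haveI : Fact p.Prime := ⟨hp⟩
  have hp1 : 1 < p := hp.one_lt
  have hppos : 0 < p - 1 := by omega
  have hpow : 0 < p ^ m := Nat.pow_pos (n := m) (by omega)
  have htpos : 0 < a * p ^ m := Nat.mul_pos ha0 hpow
  have hdiv : 2 * d / (p - 1) = a * p ^ m := by
    rw [h2d, Nat.mul_div_cancel _ hppos]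
  have hlam : lambdaP p (a * p ^ m) = m * (a * p ^ m) := by
    rw [lambdaP_a_pow p a m hp1 (by omega) hap, mul_assoc]
  have hnum : p * (a * p ^ m) + (p - 1) * lambdaP p (a * p ^ m)
      = p * (a * p ^ m) + d * (2 * m) := by
    rw [hlam]
    have : (p - 1) * (m * (a * p ^ m)) = m * (a * p ^ m * (p - 1)) := by ring
    rw [this, ← h2d]; ring
  have hpt : p * (a * p ^ m) / d = 2 * p / (p - 1) := by
    have h0 : p * (a * p ^ m) / d = (2 * (p * (a * p ^ m))) / (2 * d) := by
      rw [Nat.mul_div_mul_left _ _ (by norm_num)]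
    rw [h0, h2d]
    have h1 : 2 * (p * (a * p ^ m)) = a * p ^ m * (2 * p) := by ring
    rw [h1, Nat.mul_div_mul_left _ _ htpos]
  have hB' : Bprime p d = 2 + (2 * p / (p - 1) + 2 * m) := by
    rw [Bprime, hdiv, hnum, Nat.add_mul_div_left _ _ hd, hpt]
  unfold B0
  by_cases hp2 : p = 2
  · subst hp2
    have ha1 : a = 1 := by omega
    have h2d' : 2 * d = 2 ^ m := by
      rw [h2d, ha1]; norm_num
    obtain ⟨m', rfl⟩ : ∃ m', m = m' + 1 := by
      rcases Nat.eq_zero_or_pos m with h | h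
      · rw [h, pow_zero] at h2d'; omega
      · exact ⟨m - 1, by omega⟩
    have hdval : d = 2 ^ m' := by
      rw [pow_succ'] at h2d'; omega
    have hval : padicValNat 2 d = m' := by
      rw [hdval, padicValNat.prime_pow]
    rw [if_pos rfl, hval, hB']
    norm_num; omega
  · by_cases hp3 : p = 3
    · subst hp3
      rw [if_neg hp2, if_pos rfl]
      have hdval : d = a * 3 ^ m := by omega
      have hval : padicValNat 3 d = m := by
        rw [hdval, padicValNat.mul (by omega) (by positivity),
          padicValNat.prime_pow,
          padicValNat.eq_zero_of_not_dvd (by omega)]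
        omega
      rw [hval, hB']
      norm_num
      omega
    · have hp5 : 5 ≤ p := by
        by_contra h
        interval_cases p <;> simp_all (config := {decide := true})
      have hdvd : (p - 1) ∣ 2 * d := ⟨a * p ^ m, by rw [h2d]; ring⟩
      rw [if_neg hp2, if_neg hp3, if_pos hdvd]
      obtain ⟨j, hj⟩ := hp.odd_of_ne_two (by omega)
      obtain ⟨k, hk⟩ : ∃ k, p - 1 = 2 * k := ⟨j, by omega⟩
      have hk0 : 0 < k := by omega
      have hdval : d = a * k * p ^ m := by
        have h5 : a * p ^ m * (p - 1) = 2 * (a * k * p ^ m) := by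
          rw [hk]; ring
        omega
      have hnd : ¬ p ∣ a * k := by
        intro h
        rcases (Nat.Prime.dvd_mul hp).1 h with h | h
        · exact absurd (Nat.le_of_dvd ha0 h) (by omega)
        · exact absurd (Nat.le_of_dvd hk0 h) (by omega)
      have hval : padicValNat p d = m := by
        rw [hdval, padicValNat.mul (by positivity) (by positivity),
          padicValNat.prime_pow, padicValNat.eq_zero_of_not_dvd hnd]
        omega
      have hdivp : 2 * p / (p - 1) = 2 := by
        apply Nat.div_eq_of_lt_le <;> omega
      rw [hval, hB', hdivp]
      omega
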